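/- Let G be a finite graph with Laplacian L, S ⊂ V a Λ-set (i.e. ‖φ‖ ≤ Λ‖Lφ‖ for all φ supported in S), and U = V ∖ S. If 0 < ω < 1/Λ, then U is a uniqueness set for E_ω(L): any two functions f, g ∈ E_ω(L) that agree on U agree on all of V. -/

import Mathlib

open Matrix

/-- The ℓ²-norm of a function on the vertices of a finite graph. -/
noncomputable def gnorm {V : Type*} [Fintype V] (f : V → ℝ) : ℝ :=
  Real.sqrt (∑ v, f v ^ 2)

/-- `E_ω(L)`: the span of eigenvectors of the combinatorial Laplacian `L`
whose eigenvalues are at most `ω`. -/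
noncomputable def Eomega {V : Type*} [Fintype V] [DecidableEq V]
    (G : SimpleGraph V) [DecidableRel G.Adj] (ω : ℝ) : Submodule ℝ (V → ℝ) :=
  Submodule.span ℝ
    {f : V → ℝ | f ≠ 0 ∧ ∃ μ : ℝ, μ ≤ ω ∧ (G.lapMatrix ℝ).mulVec f = μ • f}

/-- If `S` is a `Λ`-set and `0 < ω < 1/Λ`, then `U = V \ S` is a uniqueness set
for `E_ω(L)`: functions in `E_ω(L)` that agree on `U` agree everywhere. -/
theorem stmt_3 {V : Type*} [Fintype V] [DecidableEq V]
    (G : SimpleGraph V) [DecidableRel G.Adj]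
    (S : Set V) (Λ : ℝ) (hΛ : 0 < Λ)
    (hS : ∀ φ : V → ℝ, (∀ v, v ∉ S → φ v = 0) →
      gnorm φ ≤ Λ * gnorm ((G.lapMatrix ℝ).mulVec φ))
    (ω : ℝ) (hω0 : 0 < ω) (hω : ω < 1 / Λ)
    (f g : V → ℝ) (hf : f ∈ Eomega G ω) (hg : g ∈ Eomega G ω)
    (hfg : ∀ u ∈ Sᶜ, f u = g u) :
    f = g := by
  set L : Matrix V V ℝ := G.lapMatrix ℝ with hLdef
  have hPSD : L.PosSemidef := G.posSemidef_lapMatrix ℝ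
  have hH : L.IsHermitian := hPSD.1
  set B := hH.eigenvectorBasis with hBdef
  set μ := hH.eigenvalues with hμdef
  have hsymm : ∀ x y : V → ℝ, (L *ᵥ x) ⬝ᵥ y = x ⬝ᵥ (L *ᵥ y) := by
    intro x y
    have hT : Lᵀ = L := by
      have := hH.eq
      rwa [conjTranspose_eq_transpose_of_trivial] at this
    rw [dotProduct_mulVec, ← mulVec_transpose, hT]
  set h : V → ℝ := f - g with hdef
  have hmem : h ∈ Eomega G ω := Submodule.sub_mem _ hf hg
  -- key: h is orthogonal to eigenvectors with eigenvalue > ω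
  have key : ∀ i, ω < μ i → (⇑(B i) : V → ℝ) ⬝ᵥ h = 0 := by
    intro i hi
    have : ∀ x ∈ Eomega G ω, (⇑(B i) : V → ℝ) ⬝ᵥ x = 0 := by
      intro x hx
      induction hx using Submodule.span_induction with
      | mem y hy =>
        obtain ⟨hy0, ν, hνω, hν⟩ := hy
        have h1 : μ i * ((⇑(B i) : V → ℝ) ⬝ᵥ y) = ν * ((⇑(B i) : V → ℝ) ⬝ᵥ y) := by
          calc μ i * ((⇑(B i) : V → ℝ) ⬝ᵥ y) = (μ i • (⇑(B i) : V → ℝ)) ⬝ᵥ y := by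
                rw [smul_dotProduct]; rfl
            _ = (L *ᵥ ⇑(B i)) ⬝ᵥ y := by rw [hH.mulVec_eigenvectorBasis]
            _ = ⇑(B i) ⬝ᵥ (L *ᵥ y) := hsymm _ _
            _ = ⇑(B i) ⬝ᵥ (ν • y) := by rw [hν]
            _ = ν * (⇑(B i) ⬝ᵥ y) := by rw [dotProduct_smul]; rfl
        have hne : μ i ≠ ν := fun hc => absurd (hc ▸ hνω) (not_le.mpr (hc ▸ hi)).elim
        have : (μ i - ν) * ((⇑(B i) : V → ℝ) ⬝ᵥ y) = 0 := by ring_nf; linarith [h1]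
        rcases mul_eq_zero.mp this with h' | h'
        · exact absurd (sub_eq_zero.mp h') (fun hc => (not_le.mpr hi) (hc ▸ hνω))
        · exact h'
      | zero => simp
      | add y z _ _ hy hz => rw [dotProduct_add, hy, hz, add_zero]
      | smul a y _ hy => rw [dotProduct_smul, hy, smul_zero]
    exact this h hmem
  -- move to EuclideanSpace
  set e : (V → ℝ) ≃ₗ[ℝ] EuclideanSpace ℝ V := (WithLp.linearEquiv 2 ℝ (V → ℝ)).symm with hedef
  have he : ∀ (x : V → ℝ) (v : V), e x v = x v := fun _ _ => rfl
  have hrepr : ∀ (x : V → ℝ) (i : V), B.repr (e x) i = (⇑(B i) : V → ℝ) ⬝ᵥ x := by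
    intro x i
    rw [B.repr_apply_apply]
    simp [PiLp.inner_apply, RCLike.inner_apply, dotProduct, he, mul_comm]
  have hnorm : ∀ x : V → ℝ, gnorm x = ‖e x‖ := by
    intro x
    rw [EuclideanSpace.norm_eq, gnorm]
    congr 1
    refine Finset.sum_congr rfl fun v _ => ?_
    rw [he, Real.norm_eq_abs, sq_abs]
  have hnorm2 : ∀ x : V → ℝ, gnorm x ^ 2 = ∑ i, (B.repr (e x) i) ^ 2 := by
    intro x
    rw [hnorm, ← B.repr.norm_map (e x), EuclideanSpace.norm_eq,
      Real.sq_sqrt (by positivity)]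
    refine Finset.sum_congr rfl fun v _ => by rw [Real.norm_eq_abs, sq_abs]
  -- repr of L *ᵥ h
  have hreprL : ∀ i, B.repr (e (L *ᵥ h)) i = μ i * B.repr (e h) i := by
    intro i
    rw [hrepr, hrepr, ← hsymm, hH.mulVec_eigenvectorBasis, smul_dotProduct]
    rfl
  -- Bernstein: gnorm (L *ᵥ h) ≤ ω * gnorm h
  have hbern : gnorm (L *ᵥ h) ≤ ω * gnorm h := by
    have hsq : gnorm (L *ᵥ h) ^ 2 ≤ (ω * gnorm h) ^ 2 := by
      rw [mul_pow, hnorm2, hnorm2, Finset.mul_sum]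
      refine Finset.sum_le_sum fun i _ => ?_
      rw [hreprL]
      rcases eq_or_ne (B.repr (e h) i) 0 with hz | hz
      · simp [hz]
      · have hμω : μ i ≤ ω := by
          by_contra hc
          exact hz (by rw [hrepr]; exact key i (not_le.mp hc))
        have hμ0 : 0 ≤ μ i := hPSD.eigenvalues_nonneg i
        rw [mul_pow]
        have : μ i ^ 2 ≤ ω ^ 2 := by nlinarith
        nlinarith [sq_nonneg (B.repr (e h) i)]
    have h1 : 0 ≤ gnorm (L *ᵥ h) := Real.sqrt_nonneg _
    have h2 : 0 ≤ ω * gnorm h := mul_nonneg hω0.le (Real.sqrt_nonneg _)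
    nlinarith
  -- h is supported on S
  have hsupp : ∀ v, v ∉ S → h v = 0 := fun v hv => by
    rw [hdef]; simp [sub_eq_zero]; exact hfg v hv
  have hineq := hS h hsupp
  have hΛω : Λ * ω < 1 := by
    rw [lt_div_iff₀ hΛ] at hω; linarith
  have hg0 : 0 ≤ gnorm h := Real.sqrt_nonneg _
  have : gnorm h = 0 := by nlinarith
  have hsum : ∑ v, h v ^ 2 = 0 := by
    have := Real.sqrt_eq_zero (by positivity) |>.mp this
    exact this
  have hzero : h = 0 := by
    funext v
    have := (Finset.sum_eq_zero_iff_of_nonneg (fun i _ => sq_nonneg (h i))).mp hsum v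
      (Finset.mem_univ v)
    exact pow_eq_zero_iff (by norm_num) |>.mp this
  have : f - g = 0 := hzero
  funext v
  have := congrFun this v
  simpa [sub_eq_zero] using this
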